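/- Let W and Y be topological spaces with stratifications 𝒮_W and 𝒮_Y, let X be a topological space, and let f : X → W and h : X → Y be closed embeddings such that: (i) every stratum S ∈ 𝒮_W satisfies S ⊆ f(X) or S ∩ f(X) = ∅, and every stratum T ∈ 𝒮_Y satisfies T ⊆ h(X) or T ∩ h(X) = ∅; and (ii) the two partitions induced on X coincide: {f⁻¹(S) : S ∈ 𝒮_W, S ⊆ f(X)} = {h⁻¹(T) : T ∈ 𝒮_Y, T ⊆ h(X)}. Let Z be the pushout of f and h in the category of topological spaces, with canonical maps j : W → Z and i : Y → Z. Then the family {j(S) : S ∈ 𝒮_W} ∪ {i(T) : T ∈ 𝒮_Y, T ∩ h(X) = ∅} is a stratification of Z. -/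

import Mathlib

open Topology

/-- A stratification of a topological space `X`: a locally finite partition of `X`
into nonempty locally closed subsets (the strata) satisfying the frontier condition:
for all strata `S`, `T`, if `closure S ∩ T ≠ ∅` then `T ⊆ closure S`.
The incidence relation is `S' ≤ S ↔ S' ⊆ closure S`. -/
structure Stratification (X : Type*) [TopologicalSpace X] : Type _ where
  strata : Set (Set X)
  nonempty : ∀ S ∈ strata, S.Nonempty
  locallyClosed : ∀ S ∈ strata, IsLocallyClosed S
  covers : ⋃₀ strata = Set.univ
  pairwiseDisjoint : strata.PairwiseDisjoint id
  locallyFinite : ∀ x : X, ∃ U ∈ nhds x, {S ∈ strata | (S ∩ U).Nonempty}.Finite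
  frontier_cond : ∀ S ∈ strata, ∀ T ∈ strata, (closure S ∩ T).Nonempty → T ⊆ closure S

namespace PushoutStratAux

variable {X W Y : Type*}

/-- The equivalence relation on `W ⊕ Y` generated by identifying `inl (f x)` with
`inr (h x)`, described explicitly. -/
def pushRel (f : X → W) (h : X → Y) : W ⊕ Y → W ⊕ Y → Prop
  | .inl w, .inl w' => w = w'
  | .inl w, .inr y => ∃ x, w = f x ∧ y = h x
  | .inr y, .inl w => ∃ x, w = f x ∧ y = h x
  | .inr y, .inr y' => y = y'

lemma pushRel_refl (f : X → W) (h : X → Y) : ∀ a, pushRel f h a a := by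
  rintro (w | y) <;> simp [pushRel]

lemma pushRel_sound {f : X → W} {h : X → Y}
    (hfi : Function.Injective f) (hhi : Function.Injective h)
    {r : W ⊕ Y → W ⊕ Y → Prop}
    (hrel : ∀ a b, r a b ↔ ∃ x : X, a = Sum.inl (f x) ∧ b = Sum.inr (h x))
    {a b : W ⊕ Y} (hab : Quot.mk r a = Quot.mk r b) : pushRel f h a b := by
  have key : ∀ b c, r b c → pushRel f h a b = pushRel f h a c := by
    intro b c hbc
    obtain ⟨x, rfl, rfl⟩ := (hrel b c).1 hbc
    apply propext
    rcases a with w | y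
    · show (w = f x) ↔ ∃ x', w = f x' ∧ h x = h x'
      constructor
      · rintro rfl; exact ⟨x, rfl, rfl⟩
      · rintro ⟨x', rfl, hx⟩; rw [hhi hx]
    · show (∃ x', f x = f x' ∧ y = h x') ↔ (y = h x)
      constructor
      · rintro ⟨x', hx, rfl⟩; rw [hfi hx]
      · rintro rfl; exact ⟨x, rfl, rfl⟩
  have h2 : pushRel f h a a = pushRel f h a b :=
    congrArg (Quot.lift (pushRel f h a) key) hab
  exact h2 ▸ pushRel_refl f h a

end PushoutStratAux

open PushoutStratAux in
/-- Amalgamation of stratified spaces along closed embeddings: if `f : X → W` and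
`h : X → Y` are closed embeddings such that each stratum of `W` (resp. `Y`) is either
contained in or disjoint from the image of `f` (resp. `h`), and the induced partitions
on `X` coincide, then the images of the strata of `W` together with the images of the
strata of `Y` disjoint from `h(X)` form a stratification of the pushout `Z = W ⊔_X Y`. -/
theorem pushout_stratification {X W Y : Type*}
    [TopologicalSpace X] [TopologicalSpace W] [TopologicalSpace Y]
    (𝒮W : Stratification W) (𝒮Y : Stratification Y)
    (f : X → W) (h : X → Y)
    (hf : IsClosedEmbedding f) (hh : IsClosedEmbedding h)
    (hWsat : ∀ S ∈ 𝒮W.strata, S ⊆ Set.range f ∨ S ∩ Set.range f = ∅)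
    (hYsat : ∀ T ∈ 𝒮Y.strata, T ⊆ Set.range h ∨ T ∩ Set.range h = ∅)
    (hcoincide : {P : Set X | ∃ S ∈ 𝒮W.strata, S ⊆ Set.range f ∧ P = f ⁻¹' S}
               = {P : Set X | ∃ T ∈ 𝒮Y.strata, T ⊆ Set.range h ∧ P = h ⁻¹' T})
    (r : W ⊕ Y → W ⊕ Y → Prop)
    (hrel : ∀ a b, r a b ↔ ∃ x : X, a = Sum.inl (f x) ∧ b = Sum.inr (h x))
    (j : W → Quot r) (i : Y → Quot r)
    (hj : j = fun w => Quot.mk r (Sum.inl w))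
    (hi : i = fun y => Quot.mk r (Sum.inr y)) :
    ∃ 𝒵 : Stratification (Quot r),
      𝒵.strata = {P : Set (Quot r) | ∃ S ∈ 𝒮W.strata, P = j '' S} ∪
        {P : Set (Quot r) | ∃ T ∈ 𝒮Y.strata, T ∩ Set.range h = ∅ ∧ P = i '' T} := by
  have hfi := hf.injective
  have hhi := hh.injective
  -- basic facts about `j` and `i`
  have hJJ : ∀ w w', j w = j w' → w = w' := by
    intro w w' e
    simp only [hj] at e
    exact pushRel_sound hfi hhi hrel e
  have hII : ∀ y y', i y = i y' → y = y' := by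
    intro y y' e
    simp only [hi] at e
    exact pushRel_sound hfi hhi hrel e
  have hIJ : ∀ y w, i y = j w → ∃ x, w = f x ∧ y = h x := by
    intro y w e
    simp only [hi, hj] at e
    exact pushRel_sound hfi hhi hrel e
  have hJI : ∀ w y, j w = i y → ∃ x, w = f x ∧ y = h x := by
    intro w y e
    simp only [hi, hj] at e
    exact pushRel_sound hfi hhi hrel e
  have hglue : ∀ x, j (f x) = i (h x) := by
    intro x
    simp only [hi, hj]
    exact Quot.sound ((hrel _ _).2 ⟨x, rfl, rfl⟩)
  have hjinj : Function.Injective j := fun a b e => hJJ a b e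
  have hiinj : Function.Injective i := fun a b e => hII a b e
  -- preimage computations
  have hpjj : ∀ A : Set W, j ⁻¹' (j '' A) = A := fun A => Set.preimage_image_eq A hjinj
  have hpii : ∀ A : Set Y, i ⁻¹' (i '' A) = A := fun A => Set.preimage_image_eq A hiinj
  have hpji : ∀ A : Set Y, j ⁻¹' (i '' A) = f '' (h ⁻¹' A) := by
    intro A
    ext w
    simp only [Set.mem_preimage, Set.mem_image]
    constructor
    · rintro ⟨y, hy, e⟩
      obtain ⟨x, rfl, rfl⟩ := hIJ y w e
      exact ⟨x, hy, rfl⟩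
    · rintro ⟨x, hx, rfl⟩
      exact ⟨h x, hx, (hglue x).symm⟩
  have hpij : ∀ A : Set W, i ⁻¹' (j '' A) = h '' (f ⁻¹' A) := by
    intro A
    ext y
    simp only [Set.mem_preimage, Set.mem_image]
    constructor
    · rintro ⟨w, hw, e⟩
      obtain ⟨x, rfl, rfl⟩ := hJI w y e
      exact ⟨x, hw, rfl⟩
    · rintro ⟨x, hx, rfl⟩
      exact ⟨f x, hx, hglue x⟩
  -- the topology of the pushout
  have hopen : ∀ O : Set (Quot r), IsOpen (j ⁻¹' O) → IsOpen (i ⁻¹' O) → IsOpen O := by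
    intro O h1 h2
    rw [← (isQuotientMap_quot_mk (r := r)).isOpen_preimage, isOpen_sum_iff]
    have e1 : Sum.inl ⁻¹' (Quot.mk r ⁻¹' O) = j ⁻¹' O := by rw [hj]; rfl
    have e2 : Sum.inr ⁻¹' (Quot.mk r ⁻¹' O) = i ⁻¹' O := by rw [hi]; rfl
    rw [e1, e2]
    exact ⟨h1, h2⟩
  have hclosed : ∀ O : Set (Quot r), IsClosed (j ⁻¹' O) → IsClosed (i ⁻¹' O) → IsClosed O := by
    intro O h1 h2
    rw [← isOpen_compl_iff]
    exact hopen Oᶜ (by rw [Set.preimage_compl]; exact h1.isOpen_compl)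
      (by rw [Set.preimage_compl]; exact h2.isOpen_compl)
  have hjc : Continuous j := by rw [hj]; exact continuous_quot_mk.comp continuous_inl
  have hic : Continuous i := by rw [hi]; exact continuous_quot_mk.comp continuous_inr
  have hjcm : IsClosedMap j := by
    intro C hC
    exact hclosed _ (by rwa [hpjj])
      (by rw [hpij]; exact hh.isClosedMap _ (hC.preimage hf.continuous))
  have hicm : IsClosedMap i := by
    intro C hC
    exact hclosed _ (by rw [hpji]; exact hf.isClosedMap _ (hC.preimage hh.continuous))
      (by rwa [hpii])
  have hjce : IsClosedEmbedding j :=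
    IsClosedEmbedding.of_continuous_injective_isClosedMap hjc hjinj hjcm
  have hice : IsClosedEmbedding i :=
    IsClosedEmbedding.of_continuous_injective_isClosedMap hic hiinj hicm
  have hjclo : ∀ A : Set W, closure (j '' A) = j '' closure A := fun A => hjce.closure_image_eq A
  have hiclo : ∀ A : Set Y, closure (i '' A) = i '' closure A := fun A => hice.closure_image_eq A
  -- matching strata across the gluing
  have hmatch : ∀ (x : X) (S : Set W), S ∈ 𝒮W.strata → f x ∈ S →
      ∃ T ∈ 𝒮Y.strata, h x ∈ T ∧ h ⁻¹' T = f ⁻¹' S ∧ S = f '' (h ⁻¹' T) ∧ S ⊆ Set.range f := by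
    intro x S hS hxS
    have hyU : h x ∈ ⋃₀ 𝒮Y.strata := by rw [𝒮Y.covers]; trivial
    obtain ⟨T, hT, hxT⟩ := Set.mem_sUnion.1 hyU
    have hTr : T ⊆ Set.range h := by
      rcases hYsat T hT with htr | htr
      · exact htr
      · exact absurd htr (by
          rw [Set.eq_empty_iff_forall_notMem]
          push_neg
          exact ⟨h x, hxT, ⟨x, rfl⟩⟩)
    have hmem : h ⁻¹' T ∈ {P : Set X | ∃ S ∈ 𝒮W.strata, S ⊆ Set.range f ∧ P = f ⁻¹' S} := by
      rw [hcoincide]; exact ⟨T, hT, hTr, rfl⟩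
    obtain ⟨S', hS', hS'r, hPre⟩ := hmem
    have hxS' : f x ∈ S' := by
      have hx : x ∈ f ⁻¹' S' := hPre ▸ (show x ∈ h ⁻¹' T from hxT)
      exact hx
    have hSS' : S = S' := by
      by_contra hne
      exact Set.disjoint_left.1 (𝒮W.pairwiseDisjoint hS hS' hne) hxS hxS'
    subst hSS'
    refine ⟨T, hT, hxT, hPre, ?_, hS'r⟩
    rw [hPre, Set.image_preimage_eq_of_subset hS'r]
  -- a stratum image from `W` never meets an `i`-image of a set disjoint from `range h`
  have hdisJI : ∀ (A : Set W) (T : Set Y), T ∩ Set.range h = ∅ →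
      ∀ z, z ∈ j '' A → z ∉ i '' T := by
    rintro A T hTr z ⟨w, _, rfl⟩ ⟨y, hy, e⟩
    obtain ⟨x, _, rfl⟩ := hIJ y w e
    exact Set.eq_empty_iff_forall_notMem.1 hTr (h x) ⟨hy, x, rfl⟩
  -- strata of `W` meeting `i`-images come from strata of `Y`
  have keyW : ∀ (V : Set Y) (S : Set W), S ∈ 𝒮W.strata → ((j '' S) ∩ (i '' V)).Nonempty →
      ∃ T ∈ 𝒮Y.strata, (T ∩ V).Nonempty ∧ S = f '' (h ⁻¹' T) := by
    rintro V S hS ⟨z, ⟨w, hwS, rfl⟩, ⟨y, hyV, e⟩⟩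
    obtain ⟨x, rfl, rfl⟩ := hIJ y w e
    obtain ⟨T, hT, hxT, _, hSim, _⟩ := hmatch x S hS hwS
    exact ⟨T, hT, ⟨h x, hxT, hyV⟩, hSim⟩
  -- the candidate stratification of the pushout
  set 𝒮Z : Set (Set (Quot r)) := {P : Set (Quot r) | ∃ S ∈ 𝒮W.strata, P = j '' S} ∪
      {P : Set (Quot r) | ∃ T ∈ 𝒮Y.strata, T ∩ Set.range h = ∅ ∧ P = i '' T} with h𝒮Z
  have hmemZ : ∀ P : Set (Quot r), P ∈ 𝒮Z ↔
      (∃ S ∈ 𝒮W.strata, P = j '' S) ∨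
      (∃ T ∈ 𝒮Y.strata, T ∩ Set.range h = ∅ ∧ P = i '' T) := by
    intro P
    simp only [h𝒮Z, Set.mem_union, Set.mem_setOf_eq]
  refine ⟨⟨𝒮Z, ?_, ?_, ?_, ?_, ?_, ?_⟩, rfl⟩
  · -- nonempty
    intro P hP
    rcases (hmemZ P).1 hP with ⟨S, hS, rfl⟩ | ⟨T, hT, _, rfl⟩
    · exact (𝒮W.nonempty S hS).image j
    · exact (𝒮Y.nonempty T hT).image i
  · -- locally closed
    intro P hP
    rcases (hmemZ P).1 hP with ⟨S, hS, rfl⟩ | ⟨T, hT, _, rfl⟩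
    · exact (𝒮W.locallyClosed S hS).image hjce.toIsEmbedding.toIsInducing
        hjce.isClosed_range.isLocallyClosed
    · exact (𝒮Y.locallyClosed T hT).image hice.toIsEmbedding.toIsInducing
        hice.isClosed_range.isLocallyClosed
  · -- covers
    apply Set.eq_univ_of_forall
    intro z
    obtain ⟨a, rfl⟩ := Quot.exists_rep z
    rcases a with w | y
    · have hwU : w ∈ ⋃₀ 𝒮W.strata := by rw [𝒮W.covers]; trivial
      obtain ⟨S, hS, hwS⟩ := Set.mem_sUnion.1 hwU
      exact Set.mem_sUnion.2 ⟨j '' S, (hmemZ _).2 (Or.inl ⟨S, hS, rfl⟩),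
        ⟨w, hwS, by rw [hj]⟩⟩
    · have hyU : y ∈ ⋃₀ 𝒮Y.strata := by rw [𝒮Y.covers]; trivial
      obtain ⟨T, hT, hyT⟩ := Set.mem_sUnion.1 hyU
      rcases hYsat T hT with hsub | hemp
      · obtain ⟨x, rfl⟩ := hsub hyT
        have hxU : f x ∈ ⋃₀ 𝒮W.strata := by rw [𝒮W.covers]; trivial
        obtain ⟨S, hS, hxS⟩ := Set.mem_sUnion.1 hxU
        refine Set.mem_sUnion.2 ⟨j '' S, (hmemZ _).2 (Or.inl ⟨S, hS, rfl⟩),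
          ⟨f x, hxS, (hglue x).trans (by rw [hi])⟩⟩
      · exact Set.mem_sUnion.2 ⟨i '' T, (hmemZ _).2 (Or.inr ⟨T, hT, hemp, rfl⟩),
          ⟨y, hyT, by rw [hi]⟩⟩
  · -- pairwise disjoint
    intro P hP Q hQ hne
    simp only [Function.onFun, id_eq]
    rw [Set.disjoint_left]
    rcases (hmemZ P).1 hP with ⟨S, hS, rfl⟩ | ⟨T, hT, hTr, rfl⟩ <;>
      rcases (hmemZ Q).1 hQ with ⟨S', hS', rfl⟩ | ⟨T', hT', hT'r, rfl⟩
    · rintro z ⟨w, hwS, rfl⟩ ⟨w', hw', e⟩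
      have hSS' : S ≠ S' := fun e' => hne (by rw [e'])
      exact Set.disjoint_left.1 (𝒮W.pairwiseDisjoint hS hS' hSS')
        hwS (by rwa [hJJ w' w e] at hw')
    · intro z hz hz'
      exact (hdisJI S T' hT'r z hz hz').elim
    · intro z hz hz'
      exact (hdisJI S' T hTr z hz' hz).elim
    · rintro z ⟨y, hyT, rfl⟩ ⟨y', hy', e⟩
      have hTT' : T ≠ T' := fun e' => hne (by rw [e'])
      exact Set.disjoint_left.1 (𝒮Y.pairwiseDisjoint hT hT' hTT')
        hyT (by rwa [hII y' y e] at hy')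
  · -- locally finite
    have hbound : ∀ (UW : Set W) (UY : Set Y),
        {P ∈ 𝒮Z | (P ∩ (j '' UW ∪ i '' UY)).Nonempty} ⊆
          (fun S => j '' S) '' ({S ∈ 𝒮W.strata | (S ∩ UW).Nonempty} ∪
            (fun T => f '' (h ⁻¹' T)) '' {T ∈ 𝒮Y.strata | (T ∩ UY).Nonempty}) ∪
          (fun T => i '' T) '' {T ∈ 𝒮Y.strata | (T ∩ UY).Nonempty} := by
      rintro UW UY P ⟨hP, z, hzP, hzN⟩
      rcases (hmemZ P).1 hP with ⟨S, hS, rfl⟩ | ⟨T, hT, hTr, rfl⟩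
      · rcases hzN with hzW | hzY
        · refine Or.inl (Set.mem_image_of_mem _ (Or.inl ?_))
          obtain ⟨w, hwS, rfl⟩ := hzP
          obtain ⟨w', hw', e⟩ := hzW
          exact ⟨hS, ⟨w, hwS, by rwa [hJJ w' w e] at hw'⟩⟩
        · obtain ⟨T, hT, hTV, hSg⟩ := keyW UY S hS ⟨z, hzP, hzY⟩
          exact Or.inl (Set.mem_image_of_mem _ (Or.inr ⟨T, ⟨hT, hTV⟩, hSg.symm⟩))
      · rcases hzN with hzW | hzY
        · exact (hdisJI UW T hTr z hzW hzP).elim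
        · obtain ⟨y, hyT, rfl⟩ := hzP
          obtain ⟨y', hy', e⟩ := hzY
          exact Or.inr (Set.mem_image_of_mem _ ⟨hT, ⟨y, hyT, by rwa [hII y' y e] at hy'⟩⟩)
    have hfinbound : ∀ (UW : Set W) (UY : Set Y),
        {S ∈ 𝒮W.strata | (S ∩ UW).Nonempty}.Finite →
        {T ∈ 𝒮Y.strata | (T ∩ UY).Nonempty}.Finite →
        {P ∈ 𝒮Z | (P ∩ (j '' UW ∪ i '' UY)).Nonempty}.Finite := by
      intro UW UY h1 h2
      exact Set.Finite.subset (((h1.union (h2.image _)).image _).union (h2.image _))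
        (hbound UW UY)
    have hemptyW : {S ∈ 𝒮W.strata | (S ∩ (∅ : Set W)).Nonempty}.Finite := by
      convert Set.finite_empty
      ext S
      simp
    have hemptyY : {T ∈ 𝒮Y.strata | (T ∩ (∅ : Set Y)).Nonempty}.Finite := by
      convert Set.finite_empty
      ext T
      simp
    -- the glued case
    have hgluedCase : ∀ x : X, ∃ U ∈ nhds (j (f x)), {P ∈ 𝒮Z | (P ∩ U).Nonempty}.Finite := by
      intro x
      obtain ⟨UW, hUW, hFW⟩ := 𝒮W.locallyFinite (f x)
      obtain ⟨UY, hUY, hFY⟩ := 𝒮Y.locallyFinite (h x)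
      obtain ⟨A, hAsub, hAopen, hxA⟩ := mem_nhds_iff.1 hUW
      obtain ⟨B, hBsub, hBopen, hxB⟩ := mem_nhds_iff.1 hUY
      set C : Set X := f ⁻¹' A ∩ h ⁻¹' B with hC
      have hCopen : IsOpen C := (hAopen.preimage hf.continuous).inter
        (hBopen.preimage hh.continuous)
      have hxC : x ∈ C := ⟨hxA, hxB⟩
      set P : Set W := A \ f '' Cᶜ with hPdef
      set Q : Set Y := B \ h '' Cᶜ with hQdef
      have hPopen : IsOpen P := hAopen.sdiff (hf.isClosedMap _ hCopen.isClosed_compl)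
      have hQopen : IsOpen Q := hBopen.sdiff (hh.isClosedMap _ hCopen.isClosed_compl)
      have hfxP : f x ∈ P := by
        refine ⟨hxA, ?_⟩
        rintro ⟨x', hx', e⟩
        exact hx' ((hfi e).symm ▸ hxC)
      have hhxQ : h x ∈ Q := by
        refine ⟨hxB, ?_⟩
        rintro ⟨x', hx', e⟩
        exact hx' ((hhi e).symm ▸ hxC)
      have hfP : f ⁻¹' P = C := by
        rw [hPdef, Set.preimage_diff, Set.preimage_image_eq _ hfi, Set.diff_compl,
          Set.inter_eq_self_of_subset_right Set.inter_subset_left]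
      have hhQ : h ⁻¹' Q = C := by
        rw [hQdef, Set.preimage_diff, Set.preimage_image_eq _ hhi, Set.diff_compl,
          Set.inter_eq_self_of_subset_right Set.inter_subset_right]
      have hO : IsOpen (j '' P ∪ i '' Q) := by
        apply hopen
        · rw [Set.preimage_union, hpjj, hpji, hhQ,
            Set.union_eq_self_of_subset_right
              (by rw [← hfP]; exact Set.image_preimage_subset f P)]
          exact hPopen
        · rw [Set.preimage_union, hpij, hpii, hfP,
            Set.union_eq_self_of_subset_left
              (by rw [← hhQ]; exact Set.image_preimage_subset h Q)]
          exact hQopen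
      refine ⟨j '' UW ∪ i '' UY, ?_, hfinbound UW UY hFW hFY⟩
      rw [mem_nhds_iff]
      exact ⟨j '' P ∪ i '' Q,
        Set.union_subset_union (Set.image_mono (Set.diff_subset.trans hAsub))
          (Set.image_mono (Set.diff_subset.trans hBsub)),
        hO, Or.inl ⟨f x, hfxP, rfl⟩⟩
    intro z
    obtain ⟨a, rfl⟩ := Quot.exists_rep z
    rcases a with w | y
    · by_cases hw : w ∈ Set.range f
      · obtain ⟨x, rfl⟩ := hw
        have e : (Quot.mk r (Sum.inl (f x)) : Quot r) = j (f x) := by rw [hj]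
        rw [e]
        exact hgluedCase x
      · obtain ⟨UW, hUW, hFW⟩ := 𝒮W.locallyFinite w
        obtain ⟨A, hAsub, hAopen, hwA⟩ := mem_nhds_iff.1 hUW
        have hO : IsOpen (j '' (A \ Set.range f)) := by
          apply hopen
          · rw [hpjj]
            exact hAopen.sdiff hf.isClosed_range
          · rw [hpij]
            have he : f ⁻¹' (A \ Set.range f) = ∅ :=
              Set.eq_empty_iff_forall_notMem.2 fun x' hx' => hx'.2 ⟨x', rfl⟩
            rw [he, Set.image_empty]
            exact isOpen_empty
        refine ⟨j '' UW ∪ i '' (∅ : Set Y), ?_, hfinbound UW ∅ hFW hemptyY⟩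
        rw [mem_nhds_iff]
        refine ⟨j '' (A \ Set.range f),
          (Set.image_mono (Set.diff_subset.trans hAsub)).trans Set.subset_union_left,
          hO, ⟨w, ⟨hwA, hw⟩, by rw [hj]⟩⟩
    · by_cases hy : y ∈ Set.range h
      · obtain ⟨x, rfl⟩ := hy
        have e : (Quot.mk r (Sum.inr (h x)) : Quot r) = j (f x) := by
          have e' := hglue x
          simp only [hi] at e'
          exact e'.symm
        rw [e]
        exact hgluedCase x
      · obtain ⟨UY, hUY, hFY⟩ := 𝒮Y.locallyFinite y
        obtain ⟨B, hBsub, hBopen, hyB⟩ := mem_nhds_iff.1 hUY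
        have hO : IsOpen (i '' (B \ Set.range h)) := by
          apply hopen
          · rw [hpji]
            have he : h ⁻¹' (B \ Set.range h) = ∅ :=
              Set.eq_empty_iff_forall_notMem.2 fun x' hx' => hx'.2 ⟨x', rfl⟩
            rw [he, Set.image_empty]
            exact isOpen_empty
          · rw [hpii]
            exact hBopen.sdiff hh.isClosed_range
        refine ⟨j '' (∅ : Set W) ∪ i '' UY, ?_, hfinbound ∅ UY hemptyW hFY⟩
        rw [mem_nhds_iff]
        refine ⟨i '' (B \ Set.range h),
          (Set.image_mono (Set.diff_subset.trans hBsub)).trans Set.subset_union_right,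
          hO, ⟨y, ⟨hyB, hy⟩, by rw [hi]⟩⟩
  · -- frontier condition
    intro P hP Q hQ hne
    rcases (hmemZ P).1 hP with ⟨S, hS, rfl⟩ | ⟨T, hT, hTr, rfl⟩ <;>
      rcases (hmemZ Q).1 hQ with ⟨S', hS', rfl⟩ | ⟨T', hT', hT'r, rfl⟩
    · rw [hjclo, ← Set.image_inter hjinj] at hne
      have hsub : S' ⊆ closure S := 𝒮W.frontier_cond S hS S' hS' hne.of_image
      rw [hjclo]
      exact Set.image_mono hsub
    · rw [hjclo] at hne
      obtain ⟨z, hz1, hz2⟩ := hne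
      exact ((hdisJI _ T' hT'r z hz1 hz2).elim)
    · rw [hiclo] at hne
      obtain ⟨z, ⟨y, hyc, rfl⟩, ⟨w, hwS', e⟩⟩ := hne
      obtain ⟨x, rfl, rfl⟩ := hJI w y e
      obtain ⟨T'', hT'', hxT'', hPre, _, hS'rf⟩ := hmatch x S' hS' hwS'
      have hT''sub : T'' ⊆ closure T :=
        𝒮Y.frontier_cond T hT T'' hT'' ⟨h x, hyc, hxT''⟩
      rw [hiclo]
      rintro z ⟨w', hw'S', rfl⟩
      obtain ⟨x', rfl⟩ := hS'rf hw'S'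
      have hx' : h x' ∈ T'' := by
        have hx'' : x' ∈ f ⁻¹' S' := hw'S'
        rw [← hPre] at hx''
        exact hx''
      exact ⟨h x', hT''sub hx', (hglue x').symm⟩
    · rw [hiclo, ← Set.image_inter hiinj] at hne
      have hsub : T' ⊆ closure T := 𝒮Y.frontier_cond T hT T' hT' hne.of_image
      rw [hiclo]
      exact Set.image_mono hsub
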